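/- arXiv:math/0608725 — 3 statements merged into one kernel-verified Lean document; each statement's English description precedes it below -/
import Mathlib

section
/- Let K be a non-archimedean valued field as above and let u : K → K^b be the polynomial function u(x) = Σ_{n=0}^m a_n x^n with coefficients a_n ∈ K^b. Then for each q ≥ 0 and all x, v_1,…,v_q, t_1,…,t_q ∈ K with |x| ≤ 1, |v_i| ≤ 1 and |t_i| ≤ 1 for all i, one has |Φ̄^q u(x; v_1,…,v_q; t_1,…,t_q)| ≤ max_{0 ≤ n ≤ m} |a_n|. -/
open Filter Topology

/-- The iterated partial difference quotient
`Φ^n f(x; v₁,…,vₙ; t₁,…,tₙ)`, defined by `Φ⁰ f = f` and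
`Φ^{n+1} f(x;v;t) = (Φ^n f(x + t_{n+1}•v_{n+1}; v₁,…,vₙ; t₁,…,tₙ) - Φ^n f(x; v₁,…,vₙ; t₁,…,tₙ))/t_{n+1}`,
with junk value `0` whenever some `tᵢ = 0`. -/
noncomputable def phiQuot {K X Y : Type*} [Field K] [AddCommGroup X] [Module K X]
    [AddCommGroup Y] [Module K Y] (f : X → Y) :
    (n : ℕ) → X → (Fin n → X) → (Fin n → K) → Y
  | 0 => fun x _ _ => f x
  | n + 1 => fun x v t =>
      (t (Fin.last n))⁻¹ •
        (phiQuot f n (x + t (Fin.last n) • v (Fin.last n)) (Fin.init v) (Fin.init t) -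
          phiQuot f n x (Fin.init v) (Fin.init t))

/-- The domain `U^{(n)} = {(x;v₁,…,vₙ;t₁,…,tₙ) : x ∈ U, x+v₁t₁ ∈ U, …, x+v₁t₁+⋯+vₙtₙ ∈ U}`. -/
def phiDom (K : Type*) {X : Type*} [Field K] [AddCommGroup X] [Module K X]
    (U : Set X) (n : ℕ) : Set (X × (Fin n → X) × (Fin n → K)) :=
  {p | ∀ k : ℕ, k ≤ n →
    p.1 + ∑ i ∈ Finset.univ.filter (fun i : Fin n => (i : ℕ) < k), p.2.2 i • p.2.1 i ∈ U}

/-- `f` is of class `C^n` on `U`: `f` is continuous on `U` and for every `k ≤ n` the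
partial difference quotient `Φ^k f` (defined for nonzero `tᵢ`) admits a continuous
extension to all of `U^{(k)}`. -/
def IsCn (K : Type*) {X Y : Type*} [Field K] [TopologicalSpace K] [AddCommGroup X]
    [Module K X] [TopologicalSpace X] [AddCommGroup Y] [Module K Y] [TopologicalSpace Y]
    (U : Set X) (f : X → Y) (n : ℕ) : Prop :=
  ContinuousOn f U ∧
    ∀ k : ℕ, k ≤ n →
      ∃ g : X × (Fin k → X) × (Fin k → K) → Y,
        ContinuousOn g (phiDom K U k) ∧
          ∀ p ∈ phiDom K U k, (∀ i, p.2.2 i ≠ 0) → g p = phiQuot f k p.1 p.2.1 p.2.2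

section Aux
variable {K : Type*} [NontriviallyNormedField K] {b : ℕ}

lemma hnaY (hna : ∀ x y : K, ‖x + y‖ ≤ max ‖x‖ ‖y‖) (y z : Fin b → K) :
    ‖y + z‖ ≤ max ‖y‖ ‖z‖ := by
  apply (pi_norm_le_iff_of_nonneg (le_max_of_le_left (norm_nonneg _))).2
  intro i
  calc ‖(y + z) i‖ = ‖y i + z i‖ := rfl
    _ ≤ max ‖y i‖ ‖z i‖ := hna _ _
    _ ≤ max ‖y‖ ‖z‖ := max_le_max (norm_le_pi_norm _ _) (norm_le_pi_norm _ _)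

lemma na_sum (hna : ∀ x y : K, ‖x + y‖ ≤ max ‖x‖ ‖y‖) {M : ℝ} (hM : 0 ≤ M)
    {ι : Type*} (s : Finset ι) (f : ι → Fin b → K) (h : ∀ i ∈ s, ‖f i‖ ≤ M) :
    ‖∑ i ∈ s, f i‖ ≤ M := by
  classical
  induction s using Finset.induction with
  | empty => simpa using hM
  | insert _ _ hx ih =>
    rw [Finset.sum_insert hx]
    refine le_trans (hnaY hna _ _) (max_le (h _ (Finset.mem_insert_self _ _)) ?_)
    exact ih fun i hi => h i (Finset.mem_insert_of_mem hi)

lemma na_natCast (hna : ∀ x y : K, ‖x + y‖ ≤ max ‖x‖ ‖y‖) (n : ℕ) : ‖(n : K)‖ ≤ 1 := by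
  induction n with
  | zero => simp
  | succ n ih =>
    push_cast
    exact le_trans (hna _ _) (max_le ih (by simp))

lemma step1 (hna : ∀ x y : K, ‖x + y‖ ≤ max ‖x‖ ‖y‖) {M : ℝ} (hM : 0 ≤ M)
    (N : ℕ) (a : ℕ → Fin b → K) (ha : ∀ n, ‖a n‖ ≤ M)
    (v t : K) (ht : t ≠ 0) (hv : ‖v‖ ≤ 1) (ht1 : ‖t‖ ≤ 1) :
    ∃ a' : ℕ → Fin b → K, (∀ n, ‖a' n‖ ≤ M) ∧ ∀ x : K,
      t⁻¹ • (∑ n ∈ Finset.range N, (x + t * v) ^ n • a n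
          - ∑ n ∈ Finset.range N, x ^ n • a n)
        = ∑ n ∈ Finset.range N, x ^ n • a' n := by
  classical
  refine ⟨fun k => ∑ n ∈ Finset.range N, if k < n then
      ((n.choose k : K) * t ^ (n - 1 - k) * v ^ (n - k)) • a n else 0, ?_, ?_⟩
  · intro k
    apply na_sum hna hM
    intro n _
    split
    · rw [norm_smul]
      have h1 : ‖(n.choose k : K) * t ^ (n - 1 - k) * v ^ (n - k)‖ ≤ 1 := by
        rw [norm_mul, norm_mul, norm_pow, norm_pow]
        have := na_natCast hna (n.choose k)
        have h2 : ‖t‖ ^ (n - 1 - k) ≤ 1 := pow_le_one₀ (norm_nonneg _) ht1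
        have h3 : ‖v‖ ^ (n - k) ≤ 1 := pow_le_one₀ (norm_nonneg _) hv
        calc ‖(n.choose k : K)‖ * ‖t‖ ^ (n-1-k) * ‖v‖ ^ (n-k)
            ≤ 1 * 1 * 1 := by gcongr
          _ = 1 := by ring
      calc ‖(n.choose k : K) * t ^ (n-1-k) * v ^ (n-k)‖ * ‖a n‖
          ≤ 1 * M := by gcongr; exact ha n
        _ = M := one_mul M
    · simpa using hM
  · intro x
    have key : ∀ n : ℕ, t⁻¹ * ((x + t * v) ^ n - x ^ n)
        = ∑ k ∈ Finset.range n, (n.choose k : K) * t ^ (n - 1 - k) * v ^ (n - k) * x ^ k := by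
      intro n
      have h1 : (x + t * v) ^ n - x ^ n
          = ∑ k ∈ Finset.range n, x ^ k * (t * v) ^ (n - k) * (n.choose k : K) := by
        rw [add_pow, Finset.sum_range_succ]
        simp
      rw [h1, Finset.mul_sum]
      refine Finset.sum_congr rfl fun k hk => ?_
      have hk' : k < n := Finset.mem_range.1 hk
      have h2 : (t * v) ^ (n - k) = t * (t ^ (n - 1 - k) * v ^ (n - k)) := by
        rw [mul_pow]
        have : n - k = (n - 1 - k) + 1 := by omega
        rw [this, pow_succ]
        ring
      rw [h2]
      field_simp
    rw [← Finset.sum_sub_distrib, Finset.smul_sum]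
    have h3 : ∀ n ∈ Finset.range N,
        t⁻¹ • ((x + t * v) ^ n • a n - x ^ n • a n)
          = ∑ k ∈ Finset.range N, if k < n then
              x ^ k • (((n.choose k : K) * t ^ (n - 1 - k) * v ^ (n - k)) • a n) else 0 := by
      intro n hn
      rw [← sub_smul, smul_smul, key n]
      rw [Finset.sum_smul]
      have hle : n ≤ N := le_of_lt (Finset.mem_range.1 hn)
      rw [show ∑ k ∈ Finset.range N, (if k < n then
            x ^ k • (((n.choose k : K) * t ^ (n - 1 - k) * v ^ (n - k)) • a n) else 0)
          = ∑ k ∈ Finset.range n,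
            x ^ k • (((n.choose k : K) * t ^ (n - 1 - k) * v ^ (n - k)) • a n) from ?_]
      · refine Finset.sum_congr rfl fun k hk => ?_
        rw [smul_smul]
        congr 1
        ring
      · rw [← Finset.sum_filter]
        refine (Finset.sum_congr ?_ fun _ _ => rfl)
        ext k
        simp only [Finset.mem_filter, Finset.mem_range]
        omega
    rw [Finset.sum_congr rfl h3, Finset.sum_comm]
    refine Finset.sum_congr rfl fun k _ => ?_
    rw [Finset.smul_sum]
    refine Finset.sum_congr rfl fun n _ => ?_
    split <;> simp

lemma key_ind (hna : ∀ x y : K, ‖x + y‖ ≤ max ‖x‖ ‖y‖) {M : ℝ} (hM : 0 ≤ M)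
    (q : ℕ) :
    ∀ (N : ℕ) (a : ℕ → Fin b → K), (∀ n, ‖a n‖ ≤ M) →
    ∀ (v t : Fin q → K), (∀ i, t i ≠ 0) → (∀ i, ‖v i‖ ≤ 1) → (∀ i, ‖t i‖ ≤ 1) →
    ∃ a' : ℕ → Fin b → K, (∀ n, ‖a' n‖ ≤ M) ∧
      ∀ x : K, phiQuot (fun y => ∑ n ∈ Finset.range N, y ^ n • a n) q x v t
        = ∑ n ∈ Finset.range N, x ^ n • a' n := by
  induction q with
  | zero => exact fun N a ha v t _ _ _ => ⟨a, ha, fun x => rfl⟩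
  | succ q ih =>
    intro N a ha v t ht hv ht1
    obtain ⟨a1, ha1, he⟩ := ih N a ha (Fin.init v) (Fin.init t)
      (fun i => ht _) (fun i => hv _) (fun i => ht1 _)
    obtain ⟨a', ha', he'⟩ := step1 hna hM N a1 ha1 (v (Fin.last q)) (t (Fin.last q))
      (ht _) (hv _) (ht1 _)
    refine ⟨a', ha', fun x => ?_⟩
    show (t (Fin.last q))⁻¹ • (phiQuot _ q (x + t (Fin.last q) • v (Fin.last q))
        (Fin.init v) (Fin.init t) - phiQuot _ q x (Fin.init v) (Fin.init t)) = _
    rw [he, he, smul_eq_mul]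
    exact he' x

end Aux


/-- Corollary 13. For the polynomial `u(x) = Σ_{n=0}^m aₙ xⁿ` with
coefficients in `K^b`, the continuous extension `Φ̄^q u` satisfies
`‖Φ̄^q u(x;v;t)‖ ≤ max_{0≤n≤m} ‖aₙ‖` whenever `‖x‖ ≤ 1`, `‖vᵢ‖ ≤ 1`, `‖tᵢ‖ ≤ 1`. -/
theorem statement8 {K : Type*} [NontriviallyNormedField K] [Infinite K]
    (hna : ∀ x y : K, ‖x + y‖ ≤ max ‖x‖ ‖y‖)
    (b m : ℕ) (hb : 1 ≤ b) (a : ℕ → Fin b → K)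
    (u : K → Fin b → K) (hu : u = fun x => ∑ n ∈ Finset.range (m + 1), x ^ n • a n)
    (q : ℕ)
    (g : K × (Fin q → K) × (Fin q → K) → Fin b → K)
    (hgc : Continuous g)
    (hge : ∀ (x : K) (v t : Fin q → K), (∀ i, t i ≠ 0) → g (x, v, t) = phiQuot u q x v t) :
    ∀ (x : K) (v t : Fin q → K), ‖x‖ ≤ 1 → (∀ i, ‖v i‖ ≤ 1) → (∀ i, ‖t i‖ ≤ 1) →
      ‖g (x, v, t)‖ ≤ (Finset.range (m + 1)).sup' ⟨0, by simp⟩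
        (fun n => ‖a n‖) := by
  classical
  set M : ℝ := (Finset.range (m + 1)).sup' Finset.nonempty_range_add_one (fun n => ‖a n‖) with hMdef
  have hM : 0 ≤ M := by
    have := Finset.le_sup' (fun n => ‖a n‖) (Finset.mem_range.2 (Nat.succ_pos m))
    exact le_trans (norm_nonneg (a 0)) this
  set a₀ : ℕ → Fin b → K := fun n => if n < m + 1 then a n else 0 with ha₀def
  have ha₀ : ∀ n, ‖a₀ n‖ ≤ M := by
    intro n
    by_cases h : n < m + 1
    · simp only [ha₀def, if_pos h]
      exact Finset.le_sup' (fun n => ‖a n‖) (Finset.mem_range.2 h)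
    · simp only [ha₀def, if_neg h]
      simpa using hM
  have hu' : u = fun y => ∑ n ∈ Finset.range (m + 1), y ^ n • a₀ n := by
    rw [hu]
    funext y
    refine Finset.sum_congr rfl fun n hn => ?_
    simp [ha₀def, Finset.mem_range.1 hn, Nat.not_lt.mpr (Nat.le_of_lt_succ (Finset.mem_range.1 hn))]
  have hcore : ∀ (x : K) (v t : Fin q → K), (∀ i, t i ≠ 0) → ‖x‖ ≤ 1 →
      (∀ i, ‖v i‖ ≤ 1) → (∀ i, ‖t i‖ ≤ 1) → ‖g (x, v, t)‖ ≤ M := by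
    intro x v t ht hx hv ht1
    rw [hge x v t ht, hu']
    obtain ⟨a', ha', he⟩ := key_ind hna hM q (m + 1) a₀ ha₀ v t ht hv ht1
    rw [he x]
    apply na_sum hna hM
    intro n _
    rw [norm_smul, norm_pow]
    calc ‖x‖ ^ n * ‖a' n‖ ≤ 1 * M := by
          gcongr
          · exact pow_le_one₀ (norm_nonneg _) hx
          · exact ha' n
      _ = M := one_mul M
  intro x v t hx hv ht
  obtain ⟨c, hc0, hc1⟩ := NormedField.exists_norm_lt_one (α := K)
  have hcne : c ≠ 0 := by
    intro h; rw [h] at hc0; simp at hc0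
  set ts : ℕ → Fin q → K := fun k i => if t i = 0 then c ^ (k + 1) else t i with hts
  have htend : Tendsto (fun k => g (x, v, ts k)) atTop (nhds (g (x, v, t))) := by
    have h1 : Tendsto ts atTop (nhds t) := by
      rw [tendsto_pi_nhds]
      intro i
      by_cases h : t i = 0
      · simp only [hts, if_pos h, h]
        have := tendsto_pow_atTop_nhds_zero_of_norm_lt_one hc1
        exact this.comp (tendsto_add_atTop_nat 1)
      · simp only [hts, if_neg h]
        exact tendsto_const_nhds
    have h2 : Tendsto (fun k => (x, v, ts k)) atTop (nhds (x, v, t)) := by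
      rw [nhds_prod_eq, nhds_prod_eq]
      exact Tendsto.prodMk tendsto_const_nhds (Tendsto.prodMk tendsto_const_nhds h1)
    exact (hgc.tendsto _).comp h2
  refine le_of_tendsto htend.norm (Eventually.of_forall fun k => ?_)
  apply hcore x v (ts k) _ hx hv
  · intro i
    by_cases h : t i = 0
    · simp only [hts, if_pos h, norm_pow]
      exact pow_le_one₀ (norm_nonneg _) (le_of_lt hc1)
    · simp only [hts, if_neg h]
      exact ht i
  · intro i
    by_cases h : t i = 0
    · simp only [hts, if_pos h]
      exact pow_ne_zero _ hcne
    · simp only [hts, if_neg h]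
      exact h
end

section
/- Let K be a non-archimedean valued field as above, U an open subset of K^m, Y a topological K-vector space, and f ∈ C^n(U,Y). Then Φ̄^n f is symmetric under simultaneous permutation of the pairs (v_j,t_j): for every permutation σ of {1,…,n} and every (x;v_1,…,v_n;t_1,…,t_n) ∈ U^{(n)} one has Φ̄^n f(x; v_{σ(1)},…,v_{σ(n)}; t_{σ(1)},…,t_{σ(n)}) = Φ̄^n f(x; v_1,…,v_n; t_1,…,t_n). -/
open Filter Topology

/-- Splitting off the last coordinate of a Boolean vector. -/
def snocEquivBool (n : ℕ) : ((Fin n → Bool) × Bool) ≃ (Fin (n+1) → Bool) where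
  toFun := fun p => Fin.snoc p.1 p.2
  invFun := fun ε => (Fin.init ε, ε (Fin.last n))
  left_inv := fun p => by simp
  right_inv := fun ε => by simp

lemma snocEquivBool_apply (n : ℕ) (p : (Fin n → Bool) × Bool) :
    snocEquivBool n p = Fin.snoc p.1 p.2 := rfl

/-- Explicit alternating-sum numerator of the difference quotient. -/
def Fsum {K X Y : Type*} [Field K] [AddCommGroup X] [Module K X]
    [AddCommGroup Y] [Module K Y] (f : X → Y) (n : ℕ) (x : X) (v : Fin n → X)
    (t : Fin n → K) : Y :=
  ∑ ε : Fin n → Bool, (∏ i, if ε i then (1:ℤ) else -1) •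
    f (x + ∑ i, if ε i then t i • v i else 0)

lemma Fsum_succ {K X Y : Type*} [Field K] [AddCommGroup X] [Module K X]
    [AddCommGroup Y] [Module K Y] (f : X → Y) (n : ℕ) (x : X) (v : Fin (n+1) → X)
    (t : Fin (n+1) → K) :
    Fsum f (n+1) x v t =
      Fsum f n (x + t (Fin.last n) • v (Fin.last n)) (Fin.init v) (Fin.init t)
        - Fsum f n x (Fin.init v) (Fin.init t) := by
  classical
  have key : ∀ (ε : Fin n → Bool) (b : Bool),
      (∏ i : Fin (n+1), if (Fin.snoc ε b : Fin (n+1) → Bool) i then (1:ℤ) else -1)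
        = (∏ i : Fin n, if ε i then (1:ℤ) else -1) * (if b then 1 else -1) := by
    intro ε b
    rw [Fin.prod_univ_castSucc]
    simp
  have key2 : ∀ (ε : Fin n → Bool) (b : Bool),
      (∑ i : Fin (n+1), if (Fin.snoc ε b : Fin (n+1) → Bool) i then t i • v i else 0)
        = (∑ i : Fin n, if ε i then Fin.init t i • Fin.init v i else 0)
          + (if b then t (Fin.last n) • v (Fin.last n) else 0) := by
    intro ε b
    rw [Fin.sum_univ_castSucc]
    simp [Fin.init]
  have main : Fsum f (n+1) x v t
      = ∑ p : (Fin n → Bool) × Bool,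
          ((∏ i : Fin n, if p.1 i then (1:ℤ) else -1) * (if p.2 then 1 else -1)) •
            f (x + ((∑ i : Fin n, if p.1 i then Fin.init t i • Fin.init v i else 0)
              + (if p.2 then t (Fin.last n) • v (Fin.last n) else 0))) := by
    unfold Fsum
    refine (Fintype.sum_equiv (snocEquivBool n) _ _ fun p => ?_).symm
    rw [snocEquivBool_apply, key p.1 p.2, key2 p.1 p.2]
  rw [main, Fintype.sum_prod_type]
  unfold Fsum
  rw [← Finset.sum_sub_distrib]
  refine Finset.sum_congr rfl fun ε _ => ?_
  rw [Fintype.sum_bool]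
  simp only [if_true, if_false, Bool.false_eq_true, mul_one, mul_neg_one, add_zero, neg_smul,
    sub_eq_add_neg]
  congr 2
  · congr 1
    abel

lemma phiQuot_eq_Fsum {K X Y : Type*} [Field K] [AddCommGroup X] [Module K X]
    [AddCommGroup Y] [Module K Y] (f : X → Y) (n : ℕ) (x : X) (v : Fin n → X)
    (t : Fin n → K) (ht : ∀ i, t i ≠ 0) :
    phiQuot f n x v t = (∏ i, t i)⁻¹ • Fsum f n x v t := by
  induction n generalizing x with
  | zero => simp [phiQuot, Fsum]
  | succ n ih =>
      have hti : ∀ i, Fin.init t i ≠ 0 := fun i => ht _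
      show (t (Fin.last n))⁻¹ •
          (phiQuot f n (x + t (Fin.last n) • v (Fin.last n)) (Fin.init v) (Fin.init t) -
            phiQuot f n x (Fin.init v) (Fin.init t)) = _
      rw [ih _ _ _ hti, ih _ _ _ hti, Fsum_succ, Fin.prod_univ_castSucc, ← smul_sub, smul_smul,
        mul_inv, mul_comm]
      congr 2

lemma Fsum_comp {K X Y : Type*} [Field K] [AddCommGroup X] [Module K X]
    [AddCommGroup Y] [Module K Y] (f : X → Y) (n : ℕ) (x : X) (v : Fin n → X)
    (t : Fin n → K) (σ : Equiv.Perm (Fin n)) :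
    Fsum f n x (v ∘ σ) (t ∘ σ) = Fsum f n x v t := by
  classical
  unfold Fsum
  refine Fintype.sum_equiv (Equiv.arrowCongr σ (Equiv.refl Bool)) _ _ fun ε => ?_
  have h1 : (∏ i, if ε i then (1:ℤ) else -1)
      = ∏ i, if (Equiv.arrowCongr σ (Equiv.refl Bool) ε) i then (1:ℤ) else -1 := by
    rw [← Equiv.prod_comp σ (fun i => if (Equiv.arrowCongr σ (Equiv.refl Bool) ε) i then (1:ℤ) else -1)]
    refine Finset.prod_congr rfl fun i _ => ?_
    simp [Equiv.arrowCongr]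
  have h2 : (∑ i, if ε i then (t ∘ σ) i • (v ∘ σ) i else 0)
      = ∑ i, if (Equiv.arrowCongr σ (Equiv.refl Bool) ε) i then t i • v i else 0 := by
    rw [← Equiv.sum_comp σ (fun i => if (Equiv.arrowCongr σ (Equiv.refl Bool) ε) i then t i • v i else 0)]
    refine Finset.sum_congr rfl fun i _ => ?_
    simp [Equiv.arrowCongr]
  rw [h1, h2]

lemma phiQuot_comp {K X Y : Type*} [Field K] [AddCommGroup X] [Module K X]
    [AddCommGroup Y] [Module K Y] (f : X → Y) (n : ℕ) (x : X) (v : Fin n → X)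
    (t : Fin n → K) (ht : ∀ i, t i ≠ 0) (σ : Equiv.Perm (Fin n)) :
    phiQuot f n x (v ∘ σ) (t ∘ σ) = phiQuot f n x v t := by
  rw [phiQuot_eq_Fsum f n x (v ∘ σ) (t ∘ σ) (fun i => ht (σ i)),
    phiQuot_eq_Fsum f n x v t ht, Fsum_comp]
  congr 1
  rw [show (t ∘ σ) = fun i => t (σ i) from rfl, Equiv.prod_comp σ t]

lemma eventually_mem_phiDom {K : Type*} [NontriviallyNormedField K] {m : ℕ}
    {U : Set (Fin m → K)} (hU : IsOpen U) {n : ℕ}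
    (p : (Fin m → K) × (Fin n → Fin m → K) × (Fin n → K)) (hp : p ∈ phiDom K U n) :
    ∀ᶠ s : K in 𝓝 0, (p.1, p.2.1, fun i => p.2.2 i + s) ∈ phiDom K U n := by
  classical
  have h : ∀ k ∈ Finset.range (n+1), ∀ᶠ s : K in 𝓝 0,
      p.1 + ∑ i ∈ Finset.univ.filter (fun i : Fin n => (i : ℕ) < k),
        (p.2.2 i + s) • p.2.1 i ∈ U := by
    intro k hk
    have hc : Continuous fun s : K =>
        p.1 + ∑ i ∈ Finset.univ.filter (fun i : Fin n => (i : ℕ) < k),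
          (p.2.2 i + s) • p.2.1 i := by
      refine continuous_const.add (continuous_finset_sum _ fun i _ => ?_)
      exact (continuous_const.add continuous_id).smul continuous_const
    have h0 : p.1 + ∑ i ∈ Finset.univ.filter (fun i : Fin n => (i : ℕ) < k),
        (p.2.2 i + (0:K)) • p.2.1 i ∈ U := by
      simpa using hp k (Nat.lt_succ_iff.mp (Finset.mem_range.mp hk))
    exact Filter.eventually_of_mem ((hU.preimage hc).mem_nhds h0) fun s hs => hs
  have h' := (Filter.eventually_all_finset (Finset.range (n+1))).mpr h
  filter_upwards [h'] with s hs
  intro k hk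
  exact hs k (Finset.mem_range.mpr (Nat.lt_succ_of_le hk))

/-- Lemma 24. Let `U ⊆ K^m` be open, `Y` a topological `K`-vector
space and `f ∈ C^n(U,Y)`. Then any continuous extension `Φ̄^n f` of `Φ^n f` is
symmetric under simultaneous permutation of the pairs `(vⱼ,tⱼ)`. -/
theorem statement13 {K : Type*} [NontriviallyNormedField K] [Infinite K]
    (hna : ∀ x y : K, ‖x + y‖ ≤ max ‖x‖ ‖y‖)
    {Y : Type*} [AddCommGroup Y] [Module K Y] [TopologicalSpace Y]
    [IsTopologicalAddGroup Y] [ContinuousSMul K Y] [T2Space Y]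
    (m : ℕ) (hm : 1 ≤ m) (U : Set (Fin m → K)) (hU : IsOpen U)
    (n : ℕ) (f : (Fin m → K) → Y) (hf : IsCn K U f n)
    (g : (Fin m → K) × (Fin n → Fin m → K) × (Fin n → K) → Y)
    (hgc : ContinuousOn g (phiDom K U n))
    (hge : ∀ p ∈ phiDom K U n, (∀ i, p.2.2 i ≠ 0) → g p = phiQuot f n p.1 p.2.1 p.2.2)
    (σ : Equiv.Perm (Fin n)) (p : (Fin m → K) × (Fin n → Fin m → K) × (Fin n → K))
    (hp : p ∈ phiDom K U n)
    (hpσ : (p.1, p.2.1 ∘ σ, p.2.2 ∘ σ) ∈ phiDom K U n) :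
    g (p.1, p.2.1 ∘ σ, p.2.2 ∘ σ) = g p := by
  classical
  set pσ : (Fin m → K) × (Fin n → Fin m → K) × (Fin n → K) :=
    (p.1, p.2.1 ∘ σ, p.2.2 ∘ σ) with hpσdef
  set q : K → (Fin m → K) × (Fin n → Fin m → K) × (Fin n → K) :=
    fun s => (p.1, p.2.1, fun i => p.2.2 i + s) with hqdef
  set qσ : K → (Fin m → K) × (Fin n → Fin m → K) × (Fin n → K) :=
    fun s => (p.1, p.2.1 ∘ σ, fun i => p.2.2 (σ i) + s) with hqσdef
  -- eventual membership in the domains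
  have hmem : ∀ᶠ s : K in 𝓝[≠] 0, q s ∈ phiDom K U n :=
    nhdsWithin_le_nhds (eventually_mem_phiDom hU p hp)
  have hmemσ : ∀ᶠ s : K in 𝓝[≠] 0, qσ s ∈ phiDom K U n :=
    nhdsWithin_le_nhds (eventually_mem_phiDom hU pσ hpσ)
  -- eventual nonvanishing
  have hnz : ∀ᶠ s : K in 𝓝[≠] 0, ∀ i, p.2.2 i + s ≠ 0 := by
    rw [Filter.eventually_all]
    intro i
    by_cases h : p.2.2 i = 0
    · filter_upwards [self_mem_nhdsWithin] with s hs
      simpa [h] using hs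
    · have : ∀ᶠ s : K in 𝓝 0, p.2.2 i + s ≠ 0 := by
        have hc : Continuous fun s : K => p.2.2 i + s := continuous_const.add continuous_id
        have : (0:K) ∈ {s : K | p.2.2 i + s ≠ 0} := by simpa using h
        exact Filter.eventually_of_mem
          ((isOpen_compl_singleton.preimage hc).mem_nhds this) fun s hs => hs
      exact nhdsWithin_le_nhds this
  -- the two perturbed values of `g` agree
  have heq : ∀ᶠ s : K in 𝓝[≠] 0, g (qσ s) = g (q s) := by
    filter_upwards [hmem, hmemσ, hnz] with s h1 h2 h3
    have h3σ : ∀ i, (fun i => p.2.2 (σ i) + s) i ≠ 0 := fun i => h3 (σ i)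
    rw [hge (qσ s) h2 h3σ, hge (q s) h1 h3]
    show phiQuot f n p.1 (p.2.1 ∘ σ) (fun i => p.2.2 (σ i) + s)
      = phiQuot f n p.1 p.2.1 (fun i => p.2.2 i + s)
    have : (fun i => p.2.2 (σ i) + s) = (fun i => p.2.2 i + s) ∘ σ := rfl
    rw [this]
    exact phiQuot_comp f n p.1 p.2.1 (fun i => p.2.2 i + s) h3 σ
  -- limits
  have hq0 : Filter.Tendsto q (𝓝[≠] (0:K)) (𝓝[phiDom K U n] p) := by
    rw [tendsto_nhdsWithin_iff]
    constructor
    · have hc : Continuous q := by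
        refine continuous_const.prodMk (continuous_const.prodMk ?_)
        exact continuous_pi fun i => continuous_const.add continuous_id
      have h0 : q 0 = p := by
        simp only [hqdef]
        ext <;> simp
      have := (hc.tendsto 0).mono_left (nhdsWithin_le_nhds (s := {(0:K)}ᶜ))
      rwa [h0] at this
    · exact hmem
  have hqσ0 : Filter.Tendsto qσ (𝓝[≠] (0:K)) (𝓝[phiDom K U n] pσ) := by
    rw [tendsto_nhdsWithin_iff]
    constructor
    · have hc : Continuous qσ := by
        refine continuous_const.prodMk (continuous_const.prodMk ?_)
        exact continuous_pi fun i => continuous_const.add continuous_id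
      have h0 : qσ 0 = pσ := by
        simp only [hqσdef, hpσdef]
        ext <;> simp [Function.comp]
      have := (hc.tendsto 0).mono_left (nhdsWithin_le_nhds (s := {(0:K)}ᶜ))
      rwa [h0] at this
    · exact hmemσ
  have t1 : Filter.Tendsto (g ∘ q) (𝓝[≠] (0:K)) (𝓝 (g p)) :=
    ((hgc p hp).tendsto).comp hq0
  have t2 : Filter.Tendsto (g ∘ qσ) (𝓝[≠] (0:K)) (𝓝 (g pσ)) :=
    ((hgc pσ hpσ).tendsto).comp hqσ0
  have t1' : Filter.Tendsto (g ∘ qσ) (𝓝[≠] (0:K)) (𝓝 (g p)) :=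
    t1.congr' (heq.mono fun s hs => hs.symm)
  exact tendsto_nhds_unique t2 t1'
end

section
/- Let K be a non-archimedean valued field as above, U an open subset of K^m, Y a topological K-vector space, f ∈ C^{n−1}(U,Y), and δ > 0. Then the restriction of Φ^n f to the set {(x;v_1,…,v_n;t_1,…,t_n) ∈ U^{(n)} : |t_i| ≥ δ for at least one i} is continuous. -/
open Filter Topology

/-- Lemma 26. Let `U ⊆ K^m` be open, `Y` a topological `K`-vector
space, `f ∈ C^{n}(U,Y)` with continuous extension `G = Φ̄^{n} f`, and `δ > 0`. Then the
iterated quotient `Φ^{n+1} f`, built from `G` by taking the difference quotient in the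
`i`-th pair of variables, is continuous on the part of `U^{(n+1)}` where `‖tᵢ‖ ≥ δ`
(and where both tuples fed to `G` lie in `U^{(n)}`). -/
theorem statement15 {K : Type*} [NontriviallyNormedField K] [Infinite K]
    (hna : ∀ x y : K, ‖x + y‖ ≤ max ‖x‖ ‖y‖)
    {Y : Type*} [AddCommGroup Y] [Module K Y] [TopologicalSpace Y]
    [IsTopologicalAddGroup Y] [ContinuousSMul K Y]
    (m : ℕ) (hm : 1 ≤ m) (U : Set (Fin m → K)) (hU : IsOpen U)
    (n : ℕ) (f : (Fin m → K) → Y) (hf : IsCn K U f n) (δ : ℝ) (hδ : 0 < δ)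
    (G : (Fin m → K) × (Fin n → Fin m → K) × (Fin n → K) → Y)
    (hGc : ContinuousOn G (phiDom K U n))
    (hGe : ∀ p ∈ phiDom K U n, (∀ i, p.2.2 i ≠ 0) → G p = phiQuot f n p.1 p.2.1 p.2.2)
    (i : Fin (n + 1)) :
    ContinuousOn
      (fun p : (Fin m → K) × (Fin (n + 1) → Fin m → K) × (Fin (n + 1) → K) =>
        (p.2.2 i)⁻¹ •
          (G (p.1 + p.2.2 i • p.2.1 i, fun j => p.2.1 (i.succAbove j),
              fun j => p.2.2 (i.succAbove j)) -
           G (p.1, fun j => p.2.1 (i.succAbove j), fun j => p.2.2 (i.succAbove j))))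
      {p : (Fin m → K) × (Fin (n + 1) → Fin m → K) × (Fin (n + 1) → K) |
        p ∈ phiDom K U (n + 1) ∧ δ ≤ ‖p.2.2 i‖ ∧
        (p.1, (fun j => p.2.1 (i.succAbove j)), fun j => p.2.2 (i.succAbove j))
          ∈ phiDom K U n ∧
        (p.1 + p.2.2 i • p.2.1 i, (fun j => p.2.1 (i.succAbove j)),
          fun j => p.2.2 (i.succAbove j)) ∈ phiDom K U n} := by

  set S := {p : (Fin m → K) × (Fin (n + 1) → Fin m → K) × (Fin (n + 1) → K) |
        p ∈ phiDom K U (n + 1) ∧ δ ≤ ‖p.2.2 i‖ ∧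
        (p.1, (fun j => p.2.1 (i.succAbove j)), fun j => p.2.2 (i.succAbove j))
          ∈ phiDom K U n ∧
        (p.1 + p.2.2 i • p.2.1 i, (fun j => p.2.1 (i.succAbove j)),
          fun j => p.2.2 (i.succAbove j)) ∈ phiDom K U n} with hS
  have hc1 : Continuous (fun p : (Fin m → K) × (Fin (n + 1) → Fin m → K) × (Fin (n + 1) → K) =>
      ((p.1 + p.2.2 i • p.2.1 i, fun j => p.2.1 (i.succAbove j),
        fun j => p.2.2 (i.succAbove j)) : (Fin m → K) × (Fin n → Fin m → K) × (Fin n → K))) := by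
    fun_prop
  have hc2 : Continuous (fun p : (Fin m → K) × (Fin (n + 1) → Fin m → K) × (Fin (n + 1) → K) =>
      ((p.1, fun j => p.2.1 (i.succAbove j),
        fun j => p.2.2 (i.succAbove j)) : (Fin m → K) × (Fin n → Fin m → K) × (Fin n → K))) := by
    fun_prop
  have hG1 : ContinuousOn (fun p : (Fin m → K) × (Fin (n + 1) → Fin m → K) × (Fin (n + 1) → K) =>
      G (p.1 + p.2.2 i • p.2.1 i, fun j => p.2.1 (i.succAbove j),
        fun j => p.2.2 (i.succAbove j))) S :=
    hGc.comp hc1.continuousOn (fun p hp => hp.2.2.2)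
  have hG2 : ContinuousOn (fun p : (Fin m → K) × (Fin (n + 1) → Fin m → K) × (Fin (n + 1) → K) =>
      G (p.1, fun j => p.2.1 (i.succAbove j),
        fun j => p.2.2 (i.succAbove j))) S :=
    hGc.comp hc2.continuousOn (fun p hp => hp.2.2.1)
  have hinv : ContinuousOn (fun p : (Fin m → K) × (Fin (n + 1) → Fin m → K) × (Fin (n + 1) → K) =>
      (p.2.2 i)⁻¹) S := by
    intro p hp
    have hne : p.2.2 i ≠ 0 := by
      intro h
      have := hp.2.1
      rw [h, norm_zero] at this
      linarith
    exact (((continuous_apply i).comp (continuous_snd.comp continuous_snd)).continuousAt.inv₀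
      hne).continuousWithinAt
  exact hinv.smul (hG1.sub hG2)
end
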